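/- Let X be a nonsingular BV algebra and let ξ be an infinitesimal canonical map of X. Then ξ is a derivation of the BV bracket: ξ((f,g)_X) = (ξf, g)_X + (f, ξg)_X for all f, g ∈ X. -/

import Mathlib

/-!
Common setup: real unital ℤ-graded (graded-)commutative algebras, BV Laplacians,
BV brackets, BV algebra structures, canonical maps and master actions.
-/

/-- Graded commutativity with Koszul signs: `f * g = (-1)^{|f||g|} g * f`
for homogeneous `f`, `g`. -/
def GradedComm {X : Type*} [Ring X] [Algebra ℝ X] (𝒜 : ℤ → Submodule ℝ X) : Prop :=
  ∀ (i j : ℤ) (f g : X), f ∈ 𝒜 i → g ∈ 𝒜 j → f * g = ((-1 : ℝ) ^ (i * j)) • (g * f)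

/-- `D` is a BV Laplacian on the ℤ-graded algebra `X` with grading `𝒜`:
it raises degree by `1`, is a second-order differential operator
(seven-term identity on homogeneous elements), squares to zero and kills `1`. -/
def IsBVLaplacian {X : Type*} [Ring X] [Algebra ℝ X]
    (𝒜 : ℤ → Submodule ℝ X) (D : X →ₗ[ℝ] X) : Prop :=
  (∀ (i : ℤ) (f : X), f ∈ 𝒜 i → D f ∈ 𝒜 (i + 1)) ∧
  (∀ (i j k : ℤ) (f g h : X), f ∈ 𝒜 i → g ∈ 𝒜 j → h ∈ 𝒜 k →
    D (f * g * h) =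
      -(D f * g * h) - ((-1 : ℝ) ^ i) • (f * D g * h)
        - ((-1 : ℝ) ^ (i + j)) • (f * g * D h)
        + D (f * g) * h + ((-1 : ℝ) ^ ((i + 1) * j)) • (g * D (f * h))
        + ((-1 : ℝ) ^ i) • (f * D (g * h))) ∧
  (∀ f : X, D (D f) = 0) ∧
  D 1 = 0

/-- `Br` is the BV bracket associated with the Laplacian `D`: it is the bilinear
map given on homogeneous `f`, `g` by
`(f,g) = (-1)^{|f|} (D(fg) - (Df)g - (-1)^{|f|} f(Dg))`. -/
def IsBVBracketOf {X : Type*} [Ring X] [Algebra ℝ X]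
    (𝒜 : ℤ → Submodule ℝ X) (D : X →ₗ[ℝ] X) (Br : X →ₗ[ℝ] X →ₗ[ℝ] X) : Prop :=
  ∀ (i j : ℤ) (f g : X), f ∈ 𝒜 i → g ∈ 𝒜 j →
    Br f g = ((-1 : ℝ) ^ i) • (D (f * g) - D f * g - ((-1 : ℝ) ^ i) • (f * D g))

/-- A BV algebra structure on the ℤ-graded algebra `X` with grading `𝒜`:
graded commutativity, a BV Laplacian `Δ` and its associated BV bracket. -/
structure BVAlgebraStr (X : Type*) [Ring X] [Algebra ℝ X]
    (𝒜 : ℤ → Submodule ℝ X) where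
  grcomm : GradedComm 𝒜
  Δ : X →ₗ[ℝ] X
  isBVLaplacian : IsBVLaplacian 𝒜 Δ
  bracket : X →ₗ[ℝ] X →ₗ[ℝ] X
  isBracket : IsBVBracketOf 𝒜 Δ bracket

/-- The bracket `Br` is nonsingular: its center is exactly `ℝ·1`. -/
def IsNonsingularBracket {X : Type*} [Ring X] [Algebra ℝ X]
    (Br : X →ₗ[ℝ] X →ₗ[ℝ] X) : Prop :=
  ∀ c : X, (∀ f : X, Br f c = 0) ↔ ∃ r : ℝ, c = algebraMap ℝ X r

/-- `α` is a canonical map with logarithmic Jacobian `r`: a degree-preserving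
isomorphism of unital algebras with `Δ_Y(αf) - α(Δ_X f) + (r, αf)_Y = 0`,
where `r` has degree `0`. -/
def IsCanonicalWithJacobian {X Y : Type*} [Ring X] [Algebra ℝ X] [Ring Y] [Algebra ℝ Y]
    (𝒜 : ℤ → Submodule ℝ X) (ℬ : ℤ → Submodule ℝ Y)
    (ΔX : X →ₗ[ℝ] X) (ΔY : Y →ₗ[ℝ] Y) (BrY : Y →ₗ[ℝ] Y →ₗ[ℝ] Y)
    (α : X ≃ₐ[ℝ] Y) (r : Y) : Prop :=
  (∀ (i : ℤ) (f : X), f ∈ 𝒜 i → α f ∈ ℬ i) ∧ r ∈ ℬ 0 ∧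
  (∀ f : X, ΔY (α f) - α (ΔX f) + BrY r (α f) = 0)

/-- `ξ` is an infinitesimal canonical map with logarithmic Jacobian `e`:
a degree-`0` derivation with `Δ(ξf) - ξ(Δf) + (e, f) = 0`, `e` of degree `0`. -/
def IsInfCanonicalWithJacobian {X : Type*} [Ring X] [Algebra ℝ X]
    {𝒜 : ℤ → Submodule ℝ X} (B : BVAlgebraStr X 𝒜)
    (ξ : X →ₗ[ℝ] X) (e : X) : Prop :=
  (∀ (i : ℤ) (f : X), f ∈ 𝒜 i → ξ f ∈ 𝒜 i) ∧
  (∀ f g : X, ξ (f * g) = ξ f * g + f * ξ g) ∧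
  e ∈ 𝒜 0 ∧
  (∀ f : X, B.Δ (ξ f) - ξ (B.Δ f) + B.bracket e f = 0)

/-- `S` is a BV quantum master action: a degree-`0` element satisfying the
quantum master equation `ΔS + (1/2)(S,S) = 0`. -/
def IsMasterAction {X : Type*} [Ring X] [Algebra ℝ X]
    {𝒜 : ℤ → Submodule ℝ X} (B : BVAlgebraStr X 𝒜) (S : X) : Prop :=
  S ∈ 𝒜 0 ∧ B.Δ S + (1 / 2 : ℝ) • B.bracket S S = 0


private lemma bv_hs2 (i : ℤ) : ((-1:ℝ)^i) * ((-1:ℝ)^i) = 1 := by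
  rw [← zpow_add₀ (by norm_num : (-1:ℝ) ≠ 0)]
  exact Even.neg_one_zpow ⟨i, rfl⟩

/-- Leibniz rule for the bracket with a degree-0 element in the first slot. -/
private lemma bv_leibniz {X : Type*} [Ring X] [Algebra ℝ X] {𝒜 : ℤ → Submodule ℝ X}
    [GradedAlgebra 𝒜] (B : BVAlgebraStr X 𝒜) {e : X} (he : e ∈ 𝒜 0) {i j : ℤ} {f g : X}
    (hf : f ∈ 𝒜 i) (hg : g ∈ 𝒜 j) :
    B.bracket e (f * g) = B.bracket e f * g + ((-1:ℝ)^i) • (f * B.bracket e g) := by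
  obtain ⟨hdeg, h7, -, -⟩ := B.isBVLaplacian
  have hBr := B.isBracket
  have hfg : f * g ∈ 𝒜 (i + j) := SetLike.mul_mem_graded hf hg
  have hDe : B.Δ e ∈ 𝒜 1 := by simpa using hdeg 0 e he
  have hcomm1 : f * B.Δ e = ((-1:ℝ)^i) • (B.Δ e * f) := by
    simpa using B.grcomm i 1 f (B.Δ e) hf hDe
  have hcomm0 : f * e = e * f := by
    simpa using B.grcomm i 0 f e hf he
  have h7' := h7 0 i j e f g he hf hg
  simp only [zero_add, one_mul, zpow_zero, one_smul] at h7'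
  rw [hBr 0 (i+j) e (f*g) he hfg, hBr 0 i e f he hf, hBr 0 j e g he hg]
  simp only [zpow_zero, one_smul]
  rw [show e * (f*g) = e*f*g from (mul_assoc e f g).symm, h7']
  simp only [mul_sub, sub_mul, smul_sub, ← mul_assoc, hcomm1, hcomm0,
    smul_mul_assoc, smul_smul, bv_hs2, one_smul]
  module

/-- Homogeneous case of the derivation property. -/
private lemma bv_hom {X : Type*} [Ring X] [Algebra ℝ X] {𝒜 : ℤ → Submodule ℝ X}
    [GradedAlgebra 𝒜] (B : BVAlgebraStr X 𝒜) (ξ : X →ₗ[ℝ] X) (e : X)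
    (h : IsInfCanonicalWithJacobian B ξ e) {i j : ℤ} {f g : X}
    (hf : f ∈ 𝒜 i) (hg : g ∈ 𝒜 j) :
    ξ (B.bracket f g) = B.bracket (ξ f) g + B.bracket f (ξ g) := by
  obtain ⟨hξdeg, hξder, he, hcan⟩ := h
  have hBr := B.isBracket
  have key : ∀ x : X, ξ (B.Δ x) = B.Δ (ξ x) + B.bracket e x := by
    intro x
    have h0 := hcan x
    rw [sub_add, sub_eq_zero] at h0
    rw [h0]
    abel
  have hleib := bv_leibniz B he hf hg
  rw [hBr i j f g hf hg, hBr i j (ξ f) g (hξdeg i f hf) hg,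
    hBr i j f (ξ g) hf (hξdeg j g hg)]
  simp only [map_smul, map_sub, hξder, key, map_add, hleib, add_mul, mul_add, sub_mul, mul_sub]
  module

/-- infinitesimal canonical maps are derivations of the BV bracket. -/
theorem stmt7 {X : Type*} [Ring X] [Algebra ℝ X]
    (𝒜 : ℤ → Submodule ℝ X) [GradedAlgebra 𝒜] (B : BVAlgebraStr X 𝒜)
    (hX : IsNonsingularBracket B.bracket)
    (ξ : X →ₗ[ℝ] X) (e : X) (h : IsInfCanonicalWithJacobian B ξ e) :
    ∀ f g : X, ξ (B.bracket f g) = B.bracket (ξ f) g + B.bracket f (ξ g) := by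
  intro f g
  induction f using DirectSum.Decomposition.inductionOn 𝒜 with
  | zero => simp
  | add f₁ f₂ h1 h2 =>
    simp only [map_add, LinearMap.add_apply] at h1 h2 ⊢
    rw [h1, h2]; abel
  | homogeneous f =>
    obtain ⟨i, hf⟩ : ∃ i, (f : X) ∈ 𝒜 i := ⟨_, f.2⟩
    induction g using DirectSum.Decomposition.inductionOn 𝒜 with
    | zero => simp
    | add g₁ g₂ h1 h2 =>
      simp only [map_add] at h1 h2 ⊢
      rw [h1, h2]; abel
    | homogeneous g => exact bv_hom B ξ e h hf g.2
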